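/- Let T > 0 and N ≥ 1 an integer. Let f : ℝ → ℂ be a continuous T-periodic function and let g : ℝ → ℂ be a continuous NT-periodic function with absolutely summable NT-Fourier coefficients. Then ∫_0^{NT} conj(f(x)) g(x) dx = (1/T) · ∫_0^T conj(f(x)) · B_T(g)(0,x) dx. -/

import Mathlib

open Real Finset

/-- Fourier transform on the torus of period `P`: `ĥ(ζ) = ∫_0^P e^{-iζy} h(y) dy`. -/
noncomputable def fhat (P : ℝ) (h : ℝ → ℂ) (ζ : ℝ) : ℂ :=
  ∫ y in (0:ℝ)..P, Complex.exp (-(Complex.I * (ζ : ℂ) * (y : ℂ))) * h y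

/-- The `T`-periodic Bloch transform of a `P`-periodic function `g`:
`B_T(g)(ξ,x) = ∑_{ℓ ∈ ℤ} e^{2πiℓx/T} ĝ(ξ + 2πℓ/T)`. -/
noncomputable def blochT (T P : ℝ) (g : ℝ → ℂ) (ξ x : ℝ) : ℂ :=
  ∑' ℓ : ℤ, Complex.exp (2 * (Real.pi : ℂ) * Complex.I * (ℓ : ℂ) * (x : ℂ) / (T : ℂ)) *
    fhat P g (ξ + 2 * Real.pi * (ℓ : ℝ) / T)

lemma geomSumRoots (N : ℕ) (hN : 0 < N) (k : ℤ) :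
    ∑ j ∈ Finset.range N, Complex.exp (2 * (Real.pi:ℂ) * Complex.I * (k:ℂ) / (N:ℂ)) ^ j
      = if (N:ℤ) ∣ k then (N : ℂ) else 0 := by
  have hN0 : (N:ℂ) ≠ 0 := Nat.cast_ne_zero.mpr hN.ne'
  by_cases hdvd : (N:ℤ) ∣ k
  · obtain ⟨m, rfl⟩ := hdvd
    have h1 : Complex.exp (2 * (Real.pi:ℂ) * Complex.I * (((N:ℤ)*m : ℤ):ℂ) / (N:ℂ)) = 1 := by
      have : (2 * (Real.pi:ℂ) * Complex.I * (((N:ℤ)*m : ℤ):ℂ) / (N:ℂ)) = (m:ℤ) * (2 * (Real.pi:ℂ) * Complex.I) := by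
        push_cast; field_simp
      rw [this, Complex.exp_int_mul_two_pi_mul_I]
    push_cast at h1 ⊢
    rw [if_pos ⟨m, rfl⟩]
    simp [h1]
  · have h2πI : (2 * (Real.pi:ℂ) * Complex.I) ≠ 0 := by
      simp [Real.pi_ne_zero, Complex.I_ne_zero, Complex.ofReal_ne_zero]
    have hω : Complex.exp (2 * (Real.pi:ℂ) * Complex.I * (k:ℂ) / (N:ℂ)) ≠ 1 := by
      intro h
      rw [Complex.exp_eq_one_iff] at h
      obtain ⟨m, hm⟩ := h
      apply hdvd
      refine ⟨m, ?_⟩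
      have h2 : ((k:ℂ)) = (N:ℂ) * (m:ℂ) := by
        have hm' : 2 * (Real.pi:ℂ) * Complex.I * (k:ℂ)
            = 2 * (Real.pi:ℂ) * Complex.I * ((N:ℂ) * (m:ℂ)) := by
          field_simp at hm
          linear_combination (2 * (Real.pi:ℂ) * Complex.I) * hm
        exact mul_left_cancel₀ h2πI hm'
      exact_mod_cast h2
    rw [geom_sum_eq hω]
    have hpow : Complex.exp (2 * (Real.pi:ℂ) * Complex.I * (k:ℂ) / (N:ℂ)) ^ N = 1 := by
      rw [← Complex.exp_nat_mul]
      have : (N:ℂ) * (2 * (Real.pi:ℂ) * Complex.I * (k:ℂ) / (N:ℂ)) = (k:ℤ) * (2 * (Real.pi:ℂ) * Complex.I) := by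
        field_simp
      rw [this, Complex.exp_int_mul_two_pi_mul_I]
    rw [if_neg hdvd, hpow]
    simp


/-- Second identity of Lemma 2.1: for `f` a `T`-periodic function and `g` an `NT`-periodic
function, `∫_0^{NT} conj(f) g = (1/T) ∫_0^T conj(f(x)) B_T(g)(0,x) dx`. -/
theorem bloch_inner_product (T : ℝ) (hT : 0 < T) (N : ℕ) (hN : 1 ≤ N) (f g : ℝ → ℂ)
    (hfc : Continuous f) (hgc : Continuous g)
    (hfp : Function.Periodic f T) (hgp : Function.Periodic g (N * T))
    (hgs : Summable fun k : ℤ => ‖fhat (N * T) g (2 * π * (k : ℝ) / (N * T))‖) :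
    (∫ x in (0:ℝ)..(N * T), starRingEnd ℂ (f x) * g x) =
      (1 / (T : ℂ)) * ∫ x in (0:ℝ)..T, starRingEnd ℂ (f x) * blochT T (N * T) g 0 x := by
  have hNpos : 0 < N := hN
  have hNR : (0:ℝ) < N := by exact_mod_cast hNpos
  set P : ℝ := N * T with hPdef
  have hP : 0 < P := mul_pos hNR hT
  haveI : Fact (0 < P) := ⟨hP⟩
  -- lift g to the circle
  let G : AddCircle P → ℂ := hgp.lift
  have hGc : Continuous G := by
    rw [(QuotientAddGroup.isQuotientMap_mk _).continuous_iff]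
    exact hgc
  set c : ℤ → ℂ := fourierCoeff G with hcdef
  -- e k x = exp(2πikx/P)
  set e : ℤ → ℝ → ℂ := fun k x => Complex.exp (2 * (Real.pi:ℂ) * Complex.I * (k:ℂ) * (x:ℂ) / (P:ℂ)) with hedef
  have hPC : (P:ℂ) ≠ 0 := by exact_mod_cast hP.ne'
  have hTC : (T:ℂ) ≠ 0 := by exact_mod_cast hT.ne'
  have hNC : (N:ℂ) ≠ 0 := Nat.cast_ne_zero.mpr hNpos.ne'
  -- (A) fhat in terms of fourierCoeff
  have hfhat : ∀ k : ℤ, fhat P g (2 * π * (k:ℝ) / P) = (P:ℂ) * c k := by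
    intro k
    have h1 := fourierCoeff_eq_intervalIntegral G k 0
    have h2 : ∀ x : ℝ, (fourier (-k) (x : AddCircle P) : ℂ) • G (x : AddCircle P)
        = Complex.exp (-(Complex.I * ((2 * π * (k:ℝ) / P : ℝ):ℂ) * (x:ℂ))) * g x := by
      intro x
      rw [fourier_coe_apply, smul_eq_mul]
      have hGx : G (x : AddCircle P) = g x := hgp.lift_coe x
      rw [hGx]
      congr 1
      push_cast
      field_simp
    rw [zero_add] at h1
    have h3 : (∫ x in (0:ℝ)..P, (fourier (-k) (x : AddCircle P) : ℂ) • G (x : AddCircle P))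
        = fhat P g (2 * π * (k:ℝ) / P) := by
      rw [fhat]
      exact intervalIntegral.integral_congr (fun x _ => h2 x)
    rw [h3] at h1
    rw [hcdef, h1, Complex.real_smul]
    push_cast
    field_simp
  -- summability of c
  have hsumnorm : Summable fun k : ℤ => ‖c k‖ := by
    have : (fun k : ℤ => ‖fhat (N * T) g (2 * π * (k:ℝ) / (N * T))‖)
        = fun k : ℤ => ‖(P:ℂ)‖ * ‖c k‖ := by
      funext k
      rw [← hPdef, hfhat k, norm_mul]
    rw [this] at hgs
    have hgs' := hgs.mul_left (‖(P:ℂ)‖⁻¹)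
    have hpn : |P| ≠ 0 := abs_ne_zero.mpr hP.ne'
    simpa [← mul_assoc, inv_mul_cancel₀ hpn] using hgs'
  have hsum : Summable c := hsumnorm.of_norm
  -- pointwise Fourier inversion
  have hinv : ∀ x : ℝ, HasSum (fun k : ℤ => c k * e k x) (g x) := by
    intro x
    let Gc : C(AddCircle P, ℂ) := ⟨G, hGc⟩
    have hsum' : Summable (fourierCoeff (Gc : AddCircle P → ℂ)) := hsum
    have := has_pointwise_sum_fourier_series_of_summable hsum' (x : AddCircle P)
    have hGx : Gc (x : AddCircle P) = g x := hgp.lift_coe x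
    rw [hGx] at this
    convert this using 2 with k
    rw [smul_eq_mul, fourier_coe_apply]
    rfl
  -- J k = ∫_0^T conj f * e k ;  I k = ∫_0^P conj f * e k
  set J : ℤ → ℂ := fun k => ∫ x in (0:ℝ)..T, starRingEnd ℂ (f x) * e k x with hJdef
  have hecont : ∀ k : ℤ, Continuous (fun x : ℝ => e k x) := by
    intro k
    apply Complex.continuous_exp.comp
    fun_prop
  have hhcont : ∀ k : ℤ, Continuous (fun x : ℝ => starRingEnd ℂ (f x) * e k x) := by
    intro k
    exact (Complex.continuous_conj.comp hfc).mul (hecont k)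
  -- the N-periodization identity
  have hI : ∀ k : ℤ, (∫ x in (0:ℝ)..P, starRingEnd ℂ (f x) * e k x)
      = (∑ j ∈ Finset.range N, Complex.exp (2 * (Real.pi:ℂ) * Complex.I * (k:ℂ) / (N:ℂ)) ^ j) * J k := by
    intro k
    have hadj : ∑ j ∈ Finset.range N,
        (∫ x in ((j:ℝ)*T)..(((j:ℕ)+1:ℝ)*T), starRingEnd ℂ (f x) * e k x)
        = ∫ x in ((0:ℕ):ℝ)*T..((N:ℝ)*T), starRingEnd ℂ (f x) * e k x := by
      have := intervalIntegral.sum_integral_adjacent_intervals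
        (a := fun j : ℕ => (j:ℝ) * T) (n := N) (μ := MeasureTheory.volume)
        (f := fun x => starRingEnd ℂ (f x) * e k x)
        (fun j _ => (hhcont k).intervalIntegrable _ _)
      convert this using 2 with j
      push_cast
      ring_nf
    have hpiece : ∀ j : ℕ, (∫ x in ((j:ℝ)*T)..(((j:ℕ)+1:ℝ)*T), starRingEnd ℂ (f x) * e k x)
        = Complex.exp (2 * (Real.pi:ℂ) * Complex.I * (k:ℂ) / (N:ℂ)) ^ j * J k := by
      intro j
      have hshift := intervalIntegral.integral_comp_add_right
        (a := (0:ℝ)) (b := T) (d := (j:ℝ)*T)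
        (f := fun x => starRingEnd ℂ (f x) * e k x)
      have hlhs : (∫ x in ((j:ℝ)*T)..(((j:ℕ)+1:ℝ)*T), starRingEnd ℂ (f x) * e k x)
          = ∫ x in (0:ℝ)..T, starRingEnd ℂ (f (x + (j:ℝ)*T)) * e k (x + (j:ℝ)*T) := by
        rw [hshift]
        congr 1 <;> push_cast <;> ring
      rw [hlhs]
      have hint : ∀ x : ℝ, starRingEnd ℂ (f (x + (j:ℝ)*T)) * e k (x + (j:ℝ)*T)
          = Complex.exp (2 * (Real.pi:ℂ) * Complex.I * (k:ℂ) / (N:ℂ)) ^ j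
            * (starRingEnd ℂ (f x) * e k x) := by
        intro x
        have hfper : f (x + (j:ℝ)*T) = f x := by
          have := (hfp.nat_mul j) x
          simpa [mul_comm] using this
        have heper : e k (x + (j:ℝ)*T)
            = Complex.exp (2 * (Real.pi:ℂ) * Complex.I * (k:ℂ) / (N:ℂ)) ^ j * e k x := by
          rw [hedef]
          simp only
          rw [← Complex.exp_nat_mul, ← Complex.exp_add]
          congr 1
          rw [hPdef]
          push_cast
          field_simp
          ring
        rw [hfper, heper]
        ring
      rw [intervalIntegral.integral_congr (fun x _ => hint x)]
      rw [intervalIntegral.integral_const_mul]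
    calc (∫ x in (0:ℝ)..P, starRingEnd ℂ (f x) * e k x)
        = ∑ j ∈ Finset.range N,
            (∫ x in ((j:ℝ)*T)..(((j:ℕ)+1:ℝ)*T), starRingEnd ℂ (f x) * e k x) := by
          rw [hadj]; congr 1 <;> push_cast <;> ring
      _ = ∑ j ∈ Finset.range N,
            Complex.exp (2 * (Real.pi:ℂ) * Complex.I * (k:ℂ) / (N:ℂ)) ^ j * J k := by
          exact Finset.sum_congr rfl (fun j _ => hpiece j)
      _ = _ := by rw [← Finset.sum_mul]
  -- uniform bound for f
  obtain ⟨C, hC⟩ : ∃ C, ∀ x ∈ Set.Icc (0:ℝ) P, ‖f x‖ ≤ C :=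
    (isCompact_Icc (a := (0:ℝ)) (b := P)).exists_bound_of_continuousOn hfc.continuousOn
  have hnorme : ∀ (k : ℤ) (x : ℝ), ‖e k x‖ = 1 := by
    intro k x
    have : e k x = Complex.exp ((((2 * π * (k:ℝ) * x / P : ℝ)) : ℂ) * Complex.I) := by
      rw [hedef]
      simp only
      congr 1
      push_cast
      ring
    rw [this]
    exact Complex.norm_exp_ofReal_mul_I _
  have hmem : ∀ (b : ℝ), 0 < b → b ≤ P → ∀ x ∈ Set.uIoc (0:ℝ) b, x ∈ Set.Icc (0:ℝ) P := by
    intro b hb hbP x hx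
    rw [Set.uIoc_of_le hb.le] at hx
    exact ⟨hx.1.le, hx.2.trans hbP⟩
  -- swap 1 : over [0, P]
  have swap1 : HasSum (fun k : ℤ => ∫ x in (0:ℝ)..P, starRingEnd ℂ (f x) * (c k * e k x))
      (∫ x in (0:ℝ)..P, starRingEnd ℂ (f x) * g x) := by
    apply intervalIntegral.hasSum_integral_of_dominated_convergence
      (bound := fun k (_ : ℝ) => C * ‖c k‖)
    · intro k
      exact (((Complex.continuous_conj.comp hfc).mul
        (continuous_const.mul (hecont k)))).aestronglyMeasurable
    · intro k
      filter_upwards with x hx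
      rw [norm_mul, norm_mul, hnorme k x, mul_one]
      have := hC x (hmem P hP le_rfl x hx)
      calc ‖starRingEnd ℂ (f x)‖ * ‖c k‖ = ‖f x‖ * ‖c k‖ := by rw [RCLike.norm_conj]
        _ ≤ C * ‖c k‖ := mul_le_mul_of_nonneg_right this (norm_nonneg _)
    · filter_upwards with x _
      exact hsumnorm.mul_left C
    · exact intervalIntegrable_const
    · filter_upwards with x _
      exact (hinv x).mul_left (starRingEnd ℂ (f x))
  -- Bloch sum rewritten
  have hNZint : ((N:ℤ) : ℂ) ≠ 0 := by push_cast; exact hNC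
  have hinj : Function.Injective (fun ℓ : ℤ => (N:ℤ) * ℓ) :=
    mul_right_injective₀ (by exact_mod_cast hNpos.ne')
  have hsubnorm : Summable (fun ℓ : ℤ => ‖c ((N:ℤ) * ℓ)‖) :=
    hsumnorm.comp_injective hinj
  have hterm : ∀ (ℓ : ℤ) (x : ℝ),
      Complex.exp (2 * (Real.pi : ℂ) * Complex.I * (ℓ : ℂ) * (x : ℂ) / (T : ℂ)) *
        fhat P g (0 + 2 * Real.pi * (ℓ : ℝ) / T)
      = (P:ℂ) * c ((N:ℤ) * ℓ) * e ((N:ℤ) * ℓ) x := by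
    intro ℓ x
    have harg : (0 + 2 * Real.pi * (ℓ : ℝ) / T) = 2 * π * (((N:ℤ) * ℓ : ℤ):ℝ) / P := by
      rw [hPdef]
      push_cast
      field_simp
      ring
    rw [harg, hfhat ((N:ℤ) * ℓ)]
    have hexp : Complex.exp (2 * (Real.pi : ℂ) * Complex.I * (ℓ : ℂ) * (x : ℂ) / (T : ℂ))
        = e ((N:ℤ) * ℓ) x := by
      rw [hedef]
      simp only
      congr 1
      rw [hPdef]
      push_cast
      field_simp
    rw [hexp]
    ring
  have hblochsum : ∀ x : ℝ,
      HasSum (fun ℓ : ℤ => (P:ℂ) * c ((N:ℤ)*ℓ) * e ((N:ℤ)*ℓ) x) (blochT T P g 0 x) := by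
    intro x
    have hs : Summable (fun ℓ : ℤ => (P:ℂ) * c ((N:ℤ)*ℓ) * e ((N:ℤ)*ℓ) x) := by
      apply Summable.of_norm
      have : (fun ℓ : ℤ => ‖(P:ℂ) * c ((N:ℤ)*ℓ) * e ((N:ℤ)*ℓ) x‖)
          = fun ℓ : ℤ => ‖(P:ℂ)‖ * ‖c ((N:ℤ)*ℓ)‖ := by
        funext ℓ
        rw [norm_mul, norm_mul, hnorme, mul_one]
      rw [this]
      exact hsubnorm.mul_left _
    have heq : blochT T P g 0 x = ∑' ℓ : ℤ, (P:ℂ) * c ((N:ℤ)*ℓ) * e ((N:ℤ)*ℓ) x := by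
      rw [blochT]
      exact tsum_congr (fun ℓ => hterm ℓ x)
    rw [heq]
    exact hs.hasSum
  -- swap 2 : over [0, T]
  have hTP : T ≤ P := by
    rw [hPdef]
    have h1 : (1:ℝ) ≤ (N:ℝ) := by exact_mod_cast hN
    nlinarith
  have swap2 : HasSum
      (fun ℓ : ℤ => ∫ x in (0:ℝ)..T, starRingEnd ℂ (f x) * ((P:ℂ) * c ((N:ℤ)*ℓ) * e ((N:ℤ)*ℓ) x))
      (∫ x in (0:ℝ)..T, starRingEnd ℂ (f x) * blochT T P g 0 x) := by
    apply intervalIntegral.hasSum_integral_of_dominated_convergence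
      (bound := fun ℓ (_ : ℝ) => C * (‖(P:ℂ)‖ * ‖c ((N:ℤ)*ℓ)‖))
    · intro ℓ
      exact ((Complex.continuous_conj.comp hfc).mul
        (continuous_const.mul (hecont _))).aestronglyMeasurable
    · intro ℓ
      filter_upwards with x hx
      rw [norm_mul, norm_mul, norm_mul, hnorme, mul_one]
      have := hC x (hmem T hT hTP x hx)
      rw [RCLike.norm_conj]
      have h0 : (0:ℝ) ≤ ‖(P:ℂ)‖ * ‖c ((N:ℤ)*ℓ)‖ := by positivity
      exact mul_le_mul_of_nonneg_right this h0
    · filter_upwards with x _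
      exact (hsubnorm.mul_left _).mul_left C
    · exact intervalIntegrable_const
    · filter_upwards with x _
      exact (hblochsum x).mul_left (starRingEnd ℂ (f x))
  -- compute the two tsums
  have hLHS : (∫ x in (0:ℝ)..P, starRingEnd ℂ (f x) * g x)
      = ∑' k : ℤ, c k * ((∑ j ∈ Finset.range N,
          Complex.exp (2 * (Real.pi:ℂ) * Complex.I * (k:ℂ) / (N:ℂ)) ^ j) * J k) := by
    rw [← swap1.tsum_eq]
    apply tsum_congr
    intro k
    rw [← hI k]
    simp_rw [mul_left_comm (starRingEnd ℂ (f _)) (c k)]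
    rw [intervalIntegral.integral_const_mul]
  have hRHS : (∫ x in (0:ℝ)..T, starRingEnd ℂ (f x) * blochT T P g 0 x)
      = ∑' ℓ : ℤ, (P:ℂ) * c ((N:ℤ)*ℓ) * J ((N:ℤ)*ℓ) := by
    rw [← swap2.tsum_eq]
    apply tsum_congr
    intro ℓ
    simp_rw [mul_left_comm (starRingEnd ℂ (f _)) ((P:ℂ) * c ((N:ℤ)*ℓ))]
    rw [intervalIntegral.integral_const_mul]
  rw [hLHS, hRHS]
  -- evaluate geometric sums and reindex
  have hF : (fun k : ℤ => c k * ((∑ j ∈ Finset.range N,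
        Complex.exp (2 * (Real.pi:ℂ) * Complex.I * (k:ℂ) / (N:ℂ)) ^ j) * J k))
      = fun k : ℤ => c k * ((if (N:ℤ) ∣ k then (N:ℂ) else 0) * J k) := by
    funext k
    rw [geomSumRoots N hNpos k]
  rw [hF]
  rw [← Function.Injective.tsum_eq hinj (f := fun k : ℤ =>
      c k * ((if (N:ℤ) ∣ k then (N:ℂ) else 0) * J k))]
  · rw [← tsum_mul_left]
    apply tsum_congr
    intro ℓ
    rw [if_pos ⟨ℓ, rfl⟩]
    have hPNT : ((P:ℝ):ℂ) = (N:ℂ) * (T:ℂ) := by rw [hPdef]; push_cast; ring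
    rw [hPNT]
    field_simp
  · intro k hk
    simp only [Function.mem_support] at hk
    by_contra hr
    apply hk
    have : ¬ (N:ℤ) ∣ k := by
      intro ⟨m, hm⟩
      exact hr ⟨m, hm.symm⟩
    rw [if_neg this, zero_mul, mul_zero]
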